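/- Let ε > 0, set ε̃ = log(3·e^{ε/2} − 1) − log(3 − e^{ε/2}) (assuming e^{ε/2} < 3). Then for every p ∈ [0, 1/2], p/(p + (1-p)·e^{ε̃}) − p ≥ −(e^{ε/2} − 1)/(e^{ε/2} + 1). -/

import Mathlib

open Real

theorem stmt_14 (ε : ℝ) (hε : 0 < ε) (hε3 : exp (ε / 2) < 3)
    (p : ℝ) (hp : p ∈ Set.Icc (0 : ℝ) (1 / 2)) :
    -((exp (ε / 2) - 1) / (exp (ε / 2) + 1)) ≤
      p / (p + (1 - p) * exp (log (3 * exp (ε / 2) - 1) - log (3 - exp (ε / 2)))) - p := by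
  obtain ⟨hp0, hp2⟩ := hp
  set t := exp (ε / 2) with ht
  have ht1 : 1 < t := by
    rw [ht, show (1:ℝ) = exp 0 by simp]
    exact exp_lt_exp.mpr (by linarith)
  have ha : (0:ℝ) < 3 * t - 1 := by linarith
  have hb : (0:ℝ) < 3 - t := by linarith
  rw [exp_sub, exp_log ha, exp_log hb]
  have hN1 : (0:ℝ) < 3 * t - 1 + p * (4 - 4 * t) := by nlinarith
  have hDD : p + (1 - p) * ((3 * t - 1) / (3 - t))
      = (3 * t - 1 + p * (4 - 4 * t)) / (3 - t) := by
    field_simp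
    ring
  rw [hDD, ← sub_nonneg]
  have heq : p / ((3 * t - 1 + p * (4 - 4 * t)) / (3 - t)) - p - -((t - 1) / (t + 1))
      = ((t - 1) * (1 - 2 * p) * ((3 * t - 1) - 2 * (t + 1) * p))
        / ((3 * t - 1 + p * (4 - 4 * t)) * (t + 1)) := by
    rw [div_div_eq_mul_div]
    rw [div_sub' hN1.ne', sub_neg_eq_add, div_add_div _ _ hN1.ne' (by linarith : t + 1 ≠ 0), div_left_inj' (mul_ne_zero hN1.ne' (by linarith : t + 1 ≠ 0))]
    ring
  rw [heq]
  apply div_nonneg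
  · apply mul_nonneg (mul_nonneg (by linarith) (by linarith))
    nlinarith
  · nlinarith
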